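/- arXiv:1410.4954 — 6 statements merged into one kernel-verified Lean document; each statement's English description precedes it below -/
import Mathlib

section
/- For any integers p,q and positive integer k, ∑_{j=0}^{k−1} ⌊(j−p)/k⌋·⌊(j−q)/k⌋ = min(p mod k, q mod k) + ⌊p/k⌋⌊q/k⌋·k + ⌊p/k⌋(q mod k) + ⌊q/k⌋(p mod k). -/
lemma sum_ind (k : ℕ) (r : ℤ) :
    ∑ j ∈ Finset.range k, (if (j : ℤ) < r then (1:ℤ) else 0) = max 0 (min r k) := by
  induction k with
  | zero => simp
  | succ n ih =>
    rw [Finset.sum_range_succ, ih]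
    push_cast
    split_ifs with h <;> omega

lemma ediv_shift (k : ℕ) (hk : 0 < k) (p j : ℤ) (h0 : 0 ≤ j) (h1 : j < k) :
    (j - p) / (k : ℤ) = -(p / (k : ℤ)) - (if j < p % (k : ℤ) then 1 else 0) := by
  have hk' : (0:ℤ) < k := by exact_mod_cast hk
  have hr0 : 0 ≤ p % (k : ℤ) := Int.emod_nonneg p (ne_of_gt hk')
  have hrk : p % (k : ℤ) < k := Int.emod_lt_of_pos p hk'
  have hp : j - p = (j - p % (k : ℤ)) + (k : ℤ) * (-(p / (k : ℤ))) := by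
    rw [Int.emod_def]; ring
  rw [hp, Int.add_mul_ediv_left _ _ (ne_of_gt hk')]
  split_ifs with h
  · have h2 : (j - p % (k : ℤ)) = (j - p % (k : ℤ) + k) + (k : ℤ) * (-1) := by ring
    rw [h2, Int.add_mul_ediv_left _ _ (ne_of_gt hk'),
      Int.ediv_eq_zero_of_lt (by omega) (by omega)]
    ring
  · rw [Int.ediv_eq_zero_of_lt (by omega) (by omega)]
    ring

theorem floor_prod_sum (k : ℕ) (hk : 0 < k) (p q : ℤ) :
    ∑ j ∈ Finset.range k,
        Int.fdiv ((j : ℤ) - p) (k : ℤ) * Int.fdiv ((j : ℤ) - q) (k : ℤ)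
      = min (p % (k : ℤ)) (q % (k : ℤ))
        + Int.fdiv p (k : ℤ) * Int.fdiv q (k : ℤ) * (k : ℤ)
        + Int.fdiv p (k : ℤ) * (q % (k : ℤ))
        + Int.fdiv q (k : ℤ) * (p % (k : ℤ)) := by
  have hk' : (0:ℤ) < k := by exact_mod_cast hk
  have hrp0 : 0 ≤ p % (k : ℤ) := Int.emod_nonneg p (ne_of_gt hk')
  have hrpk : p % (k : ℤ) < k := Int.emod_lt_of_pos p hk'
  have hrq0 : 0 ≤ q % (k : ℤ) := Int.emod_nonneg q (ne_of_gt hk')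
  have hrqk : q % (k : ℤ) < k := Int.emod_lt_of_pos q hk'
  have key : ∀ j ∈ Finset.range k,
      Int.fdiv ((j : ℤ) - p) (k : ℤ) * Int.fdiv ((j : ℤ) - q) (k : ℤ)
        = Int.fdiv p k * Int.fdiv q k
          + Int.fdiv p k * (if (j:ℤ) < q % k then 1 else 0)
          + Int.fdiv q k * (if (j:ℤ) < p % k then 1 else 0)
          + (if (j:ℤ) < min (p % (k:ℤ)) (q % (k:ℤ)) then 1 else 0) := by
    intro j hj
    simp only [Finset.mem_range] at hj
    have hj' : (j : ℤ) < k := by exact_mod_cast hj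
    have hj0 : (0:ℤ) ≤ j := Int.ofNat_nonneg j
    rw [Int.fdiv_eq_ediv_of_nonneg _ (le_of_lt hk'), Int.fdiv_eq_ediv_of_nonneg _ (le_of_lt hk'),
      Int.fdiv_eq_ediv_of_nonneg _ (le_of_lt hk'), Int.fdiv_eq_ediv_of_nonneg _ (le_of_lt hk'),
      ediv_shift k hk p j hj0 hj', ediv_shift k hk q j hj0 hj']
    simp only [lt_min_iff]
    split_ifs <;> first | ring1 | tauto
  rw [Finset.sum_congr rfl key]
  simp only [Finset.sum_add_distrib, Finset.sum_const, Finset.card_range, ← Finset.mul_sum,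
    sum_ind, nsmul_eq_mul]
  have h1 : max 0 (min (q % (k:ℤ)) k) = q % (k:ℤ) := by omega
  have h2 : max 0 (min (p % (k:ℤ)) k) = p % (k:ℤ) := by omega
  have h3 : max 0 (min (min (p % (k:ℤ)) (q % (k:ℤ))) k) = min (p % (k:ℤ)) (q % (k:ℤ)) := by omega
  rw [h1, h2, h3]
  ring
end

section
/- For any real w and positive integer k, ∑_{j=0}^{k−1} saw((j+w)/k) = saw(w), where saw(x) = x − ⌊x⌋ − 1/2 + (1/2)·δ(x) and δ(x)=1 if x is an integer, 0 otherwise. -/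
lemma fract_term (k : ℕ) (hk : 0 < k) (n : ℤ) (f : ℝ) (h0 : 0 ≤ f) (h1 : f < 1)
    (j : ℕ) (_hj : j < k) :
    Int.fract (((j : ℝ) + ((n : ℝ) + f)) / (k : ℝ)) =
      (((((j : ℤ) + n) % k : ℤ) : ℝ) + f) / (k : ℝ) := by
  set q : ℤ := ((j : ℤ) + n) / k with hq
  set r : ℤ := ((j : ℤ) + n) % k with hr
  have hkz : (k : ℤ) ≠ 0 := by positivity
  have hr0 : 0 ≤ r := Int.emod_nonneg _ hkz
  have hrk : r < k := Int.emod_lt_of_pos _ (by exact_mod_cast hk)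
  have hdecomp : (j : ℤ) + n = k * q + r := (Int.mul_ediv_add_emod _ _).symm
  have hkR : (0:ℝ) < (k:ℝ) := by exact_mod_cast hk
  have heq : ((j : ℝ) + ((n : ℝ) + f)) / (k : ℝ) = (q : ℝ) + (((r:ℝ) + f) / (k:ℝ)) := by
    have : (j : ℝ) + (n : ℝ) = (k:ℝ) * q + r := by exact_mod_cast hdecomp
    field_simp
    linarith
  rw [heq, Int.fract_intCast_add, Int.fract_eq_self.mpr]
  constructor
  · positivity
  · rw [div_lt_one hkR]
    have : (r:ℝ) ≤ (k:ℝ) - 1 := by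
      have : r ≤ (k:ℤ) - 1 := by omega
      exact_mod_cast this
    linarith

lemma sum_emod (k : ℕ) (hk : 0 < k) (n : ℤ) :
    ∑ j ∈ Finset.range k, (((((j : ℤ) + n) % k : ℤ) : ℝ)) = ∑ j ∈ Finset.range k, (j : ℝ) := by
  have hkz : (k : ℤ) ≠ 0 := by positivity
  have hkp : (0:ℤ) < k := by exact_mod_cast hk
  have hb : ∀ m : ℤ, 0 ≤ m % k ∧ m % k < k := fun m =>
    ⟨Int.emod_nonneg m hkz, Int.emod_lt_of_pos m hkp⟩
  have key : ∀ m c : ℤ, (m % k + c) % k = (m + c) % k := fun m c => by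
    rw [Int.add_emod, Int.emod_emod_of_dvd m dvd_rfl, ← Int.add_emod]
  have key2 : ∀ m c : ℤ, (m % k - c) % k = (m - c) % k := fun m c => by
    rw [Int.sub_emod, Int.emod_emod_of_dvd m dvd_rfl, ← Int.sub_emod]
  refine Finset.sum_nbij' (fun j => ((((j : ℤ) + n) % k).toNat))
    (fun j => ((((j : ℤ) - n) % k).toNat)) ?_ ?_ ?_ ?_ ?_ <;>
    (intro a ha; simp only [Finset.mem_range] at *)
  · have := hb ((a : ℤ) + n); omega
  · have := hb ((a : ℤ) - n); omega
  · have h1 := hb ((a : ℤ) + n)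
    have h2 : ((((a : ℤ) + n) % k).toNat : ℤ) = ((a : ℤ) + n) % k := Int.toNat_of_nonneg h1.1
    have h3 : ((((a : ℤ) + n) % k) - n) % k = (a : ℤ) % k := by
      rw [key2, add_sub_cancel_right]
    have h4 : (a : ℤ) % k = a := Int.emod_eq_of_lt (by positivity) (by exact_mod_cast ha)
    rw [h2]
    have h5 := hb ((((a : ℤ) + n) % k) - n)
    omega
  · have h1 := hb ((a : ℤ) - n)
    have h2 : ((((a : ℤ) - n) % k).toNat : ℤ) = ((a : ℤ) - n) % k := Int.toNat_of_nonneg h1.1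
    have h3 : ((((a : ℤ) - n) % k) + n) % k = (a : ℤ) % k := by
      rw [key, sub_add_cancel]
    have h4 : (a : ℤ) % k = a := Int.emod_eq_of_lt (by positivity) (by exact_mod_cast ha)
    rw [h2]
    have h5 := hb ((((a : ℤ) - n) % k) + n)
    omega
  · have h1 := hb ((a : ℤ) + n)
    have h2 : ((((a : ℤ) + n) % k).toNat : ℤ) = ((a : ℤ) + n) % k := Int.toNat_of_nonneg h1.1
    exact_mod_cast h2.symm

open Classical in
lemma delta_sum (k : ℕ) (hk : 0 < k) (w : ℝ) :
    ∑ j ∈ Finset.range k, (if ∃ m : ℤ, (m : ℝ) = ((j : ℝ) + w) / (k : ℝ) then (1:ℝ)/2 else 0)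
      = (if ∃ m : ℤ, (m : ℝ) = w then (1:ℝ)/2 else 0) := by
  have hkR : (0:ℝ) < (k:ℝ) := by exact_mod_cast hk
  by_cases hw : ∃ m : ℤ, (m : ℝ) = w
  · obtain ⟨n0, hn0⟩ := hw
    have hkz : (k : ℤ) ≠ 0 := by positivity
    have hkp : (0:ℤ) < k := by exact_mod_cast hk
    set j0 : ℕ := ((-n0) % k).toNat with hj0
    have hr0 : 0 ≤ (-n0) % k := Int.emod_nonneg _ hkz
    have hrk : (-n0) % k < k := Int.emod_lt_of_pos _ hkp
    have hj0k : j0 ∈ Finset.range k := Finset.mem_range.mpr (by omega)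
    have hstep : ∀ j ∈ Finset.range k,
        (if ∃ m : ℤ, (m : ℝ) = ((j : ℝ) + w) / (k : ℝ) then (1:ℝ)/2 else 0)
          = (if j = j0 then (1:ℝ)/2 else 0) := by
      intro j hj
      rw [Finset.mem_range] at hj
      refine if_congr ?_ rfl rfl
      constructor
      · rintro ⟨m, hm⟩
        have hmZ : (m : ℤ) * k = (j : ℤ) + n0 := by
          have : (m : ℝ) * k = (j : ℝ) + n0 := by
            rw [hm, ← hn0]; field_simp
          exact_mod_cast this
        have : (j : ℤ) % k = (-n0) % k := by
          have : (j : ℤ) = -n0 + k * m := by linarith [hmZ]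
          rw [this, Int.add_mul_emod_self_left]
        have hjj : (j : ℤ) % k = j := Int.emod_eq_of_lt (by positivity) (by exact_mod_cast hj)
        omega
      · intro hjeq
        subst hjeq
        set q := (-n0) / k with hq
        have hd : (-n0) = k * q + (-n0) % k := (Int.mul_ediv_add_emod _ _).symm
        refine ⟨-q, ?_⟩
        rw [← hn0, eq_div_iff (ne_of_gt hkR)]
        have hc : ((j0 : ℤ)) = (-n0) % k := Int.toNat_of_nonneg hr0
        have : ((j0 : ℤ)) + n0 = (-q) * k := by rw [hc]; linarith [hd]
        have : ((j0 : ℝ)) + (n0 : ℝ) = ((-q : ℤ) : ℝ) * k := by exact_mod_cast this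
        linarith
    rw [Finset.sum_congr rfl hstep, Finset.sum_ite_eq' (Finset.range k) j0 (fun _ => (1:ℝ)/2),
      if_pos hj0k, if_pos ⟨n0, hn0⟩]
  · rw [if_neg hw]
    refine Finset.sum_eq_zero fun j hj => ?_
    rw [if_neg]
    rintro ⟨m, hm⟩
    exact hw ⟨m * k - j, by push_cast; rw [hm]; field_simp; ring⟩

open Classical in
/-- The saw-tooth function `saw x = x - ⌊x⌋ - 1/2 + δ(x)/2`, where `δ(x) = 1` iff `x ∈ ℤ`. -/
noncomputable def saw (x : ℝ) : ℝ :=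
  x - Int.floor x - 1/2 + (if ∃ m : ℤ, (m : ℝ) = x then (1:ℝ)/2 else 0)

theorem saw_sum_shift (k : ℕ) (hk : 0 < k) (w : ℝ) :
    ∑ j ∈ Finset.range k, saw (((j : ℝ) + w) / (k : ℝ)) = saw w := by
  classical
  have hkR : (0:ℝ) < (k:ℝ) := by exact_mod_cast hk
  set n : ℤ := ⌊w⌋ with hn
  set f : ℝ := Int.fract w with hf
  have hw : w = (n : ℝ) + f := by rw [hn, hf, Int.floor_add_fract]
  have hf0 : 0 ≤ f := Int.fract_nonneg w
  have hf1 : f < 1 := Int.fract_lt_one w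
  have hsaw : ∀ x : ℝ, saw x = Int.fract x - 1/2
      + (if ∃ m : ℤ, (m : ℝ) = x then (1:ℝ)/2 else 0) := by
    intro x; rw [saw, Int.fract]
  have h1 : ∑ j ∈ Finset.range k, saw (((j : ℝ) + w) / (k : ℝ))
      = ∑ j ∈ Finset.range k, (Int.fract (((j : ℝ) + w) / (k : ℝ)) - 1/2)
        + ∑ j ∈ Finset.range k,
          (if ∃ m : ℤ, (m : ℝ) = ((j : ℝ) + w) / (k : ℝ) then (1:ℝ)/2 else 0) := by
    rw [← Finset.sum_add_distrib]
    exact Finset.sum_congr rfl fun j _ => hsaw _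
  rw [h1, delta_sum k hk w]
  have h2 : ∑ j ∈ Finset.range k, (Int.fract (((j : ℝ) + w) / (k : ℝ)) - 1/2)
      = ∑ j ∈ Finset.range k, ((((((j : ℤ) + n) % k : ℤ) : ℝ) + f) / (k : ℝ) - 1/2) := by
    refine Finset.sum_congr rfl fun j hj => ?_
    rw [Finset.mem_range] at hj
    rw [hw, fract_term k hk n f hf0 hf1 j hj]
  rw [h2]
  have h4 : ∑ j ∈ Finset.range k, (j : ℝ) = (k : ℝ) * ((k : ℝ) - 1) / 2 := by
    have := Finset.sum_range_id_mul_two k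
    have h5 : ((∑ i ∈ Finset.range k, i : ℕ) : ℝ) * 2 = (k : ℝ) * ((k : ℝ) - 1) := by
      have hkk : (k : ℝ) * ((k:ℝ) - 1) = ((k * (k-1) : ℕ) : ℝ) := by
        push_cast [Nat.cast_sub hk]; ring
      rw [hkk]; exact_mod_cast congrArg (Nat.cast : ℕ → ℝ) this
    push_cast at h5 ⊢
    linarith
  have hsum : ∑ j ∈ Finset.range k, ((((((j : ℤ) + n) % k : ℤ) : ℝ) + f) / (k : ℝ) - 1/2)
      = f - 1/2 := by
    rw [Finset.sum_sub_distrib, Finset.sum_const, Finset.card_range, ← Finset.sum_div,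
      Finset.sum_add_distrib, Finset.sum_const, Finset.card_range, sum_emod k hk n, h4]
    simp only [nsmul_eq_mul]
    field_simp
    ring
  rw [hsum, hsaw w]
end

section
/- Let k=2^n with n≥1 and let b be a nonnegative integer. Then 4·∑_{j=0}^{k/2−1} saw((j−b)/k) equals 2(b mod k) − k/2 + 1 if 0 ≤ b mod k < k/2, and equals −2(b mod k) + 3k/2 − 1 if b mod k ≥ k/2. -/
lemma saw_int_div (a : ℤ) (c : ℕ) (hc : 0 < c) :
    saw ((a:ℝ)/(c:ℝ)) = ((a % (c:ℤ) : ℤ) : ℝ)/(c:ℝ) - 1/2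
      + (if a % (c:ℤ) = 0 then (1:ℝ)/2 else 0) := by
  have hc' : (c:ℝ) ≠ 0 := Nat.cast_ne_zero.mpr hc.ne'
  unfold saw
  have hfloor : ⌊(a:ℝ)/(c:ℝ)⌋ = a / (c:ℤ) := by
    rw [show ((a:ℝ)/(c:ℝ)) = (((a:ℚ)/(c:ℚ) : ℚ):ℝ) by push_cast; ring,
      Rat.floor_cast, Rat.floor_intCast_div_natCast]
  rw [hfloor]
  have hind : (∃ m : ℤ, (m : ℝ) = (a:ℝ)/(c:ℝ)) ↔ a % (c:ℤ) = 0 := by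
    constructor
    · rintro ⟨m, hm⟩
      have h1 : (m : ℝ) * c = a := by
        field_simp at hm
        linarith
      have h2 : m * (c:ℤ) = a := by exact_mod_cast h1
      rw [← h2]
      exact Int.mul_emod_left c m ▸ by simp [Int.mul_emod_right]
    · intro h
      obtain ⟨d, hd⟩ := Int.dvd_of_emod_eq_zero h
      refine ⟨d, ?_⟩
      rw [hd]
      push_cast
      field_simp
  simp only [hind]
  have hkey : (a:ℝ) = (c:ℝ) * ((a / (c:ℤ) : ℤ):ℝ) + ((a % (c:ℤ) : ℤ):ℝ) := by
    exact_mod_cast congrArg (Int.cast : ℤ → ℝ) (Int.mul_ediv_add_emod a c).symm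
  have : (a:ℝ)/c - ((a / (c:ℤ) : ℤ):ℝ) = ((a % (c:ℤ) : ℤ):ℝ)/c := by
    field_simp
    linarith
  linarith [this]

lemma emod_eq_add_of_neg (a n : ℤ) (h1 : -n ≤ a) (h2 : a < 0) : a % n = a + n := by
  have hn : 0 < n := by linarith
  have h3 : a % n = (a + n * 1) % n := (Int.add_mul_emod_self_left a n 1).symm
  rw [mul_one] at h3
  rw [h3, Int.emod_eq_of_lt (by linarith) (by linarith)]

theorem saw_half_sum (n k : ℕ) (hn : 1 ≤ n) (hk : k = 2 ^ n) (b : ℕ) :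
    4 * ∑ j ∈ Finset.range (k / 2), saw (((j : ℝ) - (b : ℝ)) / (k : ℝ))
      = if b % k < k / 2 then 2 * ((b % k : ℕ) : ℝ) - (k : ℝ) / 2 + 1
        else -2 * ((b % k : ℕ) : ℝ) + 3 * (k : ℝ) / 2 - 1 := by
  have hkpos : 0 < k := by
    rw [hk]; positivity
  have hkeven : 2 ∣ k := by
    rw [hk]; exact dvd_pow_self 2 (by omega)
  set K := k / 2 with hKdef
  set m := b % k with hmdef
  have hk2 : k = 2 * K := by omega
  have hK1 : 1 ≤ K := by
    have h2k : 2 ≤ k := by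
      rw [hk]
      calc 2 = 2^1 := rfl
      _ ≤ 2^n := Nat.pow_le_pow_right (by norm_num) hn
    omega
  have hm : m < k := Nat.mod_lt _ hkpos
  have hterm : ∀ j ∈ Finset.range K, saw (((j:ℝ) - (b:ℝ))/(k:ℝ))
      = ((j:ℝ) - (m:ℝ) + (if j < m then (k:ℝ) else 0))/(k:ℝ) - 1/2
        + (if j = m then (1:ℝ)/2 else 0) := by
    intro j hj
    simp only [Finset.mem_range] at hj
    have h1 : ((j:ℝ) - (b:ℝ))/(k:ℝ) = ((((j:ℤ) - (b:ℤ)) : ℤ):ℝ)/((k:ℕ):ℝ) := by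
      push_cast; ring
    rw [h1, saw_int_div _ _ hkpos]
    have hb : (b:ℤ) % (k:ℤ) = (m:ℤ) := by
      rw [hmdef]; push_cast; ring
    have e1 : ((j:ℤ) - (b:ℤ)) % (k:ℤ) = ((j:ℤ) - (m:ℤ)) % (k:ℤ) := by
      rw [Int.sub_emod, hb, Int.sub_emod (j:ℤ) (m:ℤ)]
      congr 2
      rw [Int.emod_eq_of_lt (by positivity) (by exact_mod_cast hm)]
    have hval : ((j:ℤ) - (b:ℤ)) % (k:ℤ) = (j:ℤ) - (m:ℤ) + (if j < m then (k:ℤ) else 0) := by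
      rw [e1]
      by_cases hjm : j < m
      · rw [if_pos hjm]
        have hx1 : -((k:ℕ):ℤ) ≤ (j:ℤ) - (m:ℤ) := by omega
        have hx2 : (j:ℤ) - (m:ℤ) < 0 := by omega
        exact emod_eq_add_of_neg _ _ hx1 hx2
      · rw [if_neg hjm]
        have hx1 : (0:ℤ) ≤ (j:ℤ) - (m:ℤ) := by omega
        have hx2 : (j:ℤ) - (m:ℤ) < ((k:ℕ):ℤ) := by omega
        simpa using Int.emod_eq_of_lt hx1 hx2
    have hif : (((j:ℤ) - (b:ℤ)) % (k:ℤ) = 0) ↔ (j = m) := by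
      rw [hval]
      split_ifs with h <;> omega
    rw [if_congr hif rfl rfl, hval]
    split_ifs with h1 h2 <;> push_cast <;> ring
  rw [Finset.sum_congr rfl hterm]
  have hA : (∑ j ∈ Finset.range K, (j:ℝ)) * 2 = (K:ℝ) * ((K:ℝ) - 1) := by
    have h := congrArg (Nat.cast : ℕ → ℝ) (Finset.sum_range_id_mul_two K)
    push_cast [Nat.cast_sub hK1] at h
    linarith
  have hC : ∑ j ∈ Finset.range K, (if j < m then (k:ℝ) else 0) = ((min m K : ℕ):ℝ) * (k:ℝ) := by
    rw [Finset.sum_ite, Finset.sum_const_zero, add_zero, Finset.sum_const, nsmul_eq_mul]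
    congr 1
    have hf : (Finset.range K).filter (fun j => j < m) = Finset.range (min m K) := by
      ext x; simp only [Finset.mem_filter, Finset.mem_range, lt_min_iff]; tauto
    rw [hf, Finset.card_range]
  have hD : ∑ j ∈ Finset.range K, (if j = m then (1:ℝ)/2 else 0)
      = if m < K then (1:ℝ)/2 else 0 := by
    rw [Finset.sum_ite_eq' (Finset.range K) m (fun _ => (1:ℝ)/2)]
    simp [Finset.mem_range]
  have hsplit : ∑ j ∈ Finset.range K,
      (((j:ℝ) - (m:ℝ) + (if j < m then (k:ℝ) else 0))/(k:ℝ) - 1/2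
        + (if j = m then (1:ℝ)/2 else 0))
      = ((∑ j ∈ Finset.range K, (j:ℝ)) - (K:ℝ) * (m:ℝ)
          + ((min m K : ℕ):ℝ) * (k:ℝ))/(k:ℝ) - (K:ℝ)/2
        + (if m < K then (1:ℝ)/2 else 0) := by
    rw [Finset.sum_add_distrib, Finset.sum_sub_distrib, ← Finset.sum_div,
      Finset.sum_add_distrib, Finset.sum_sub_distrib, Finset.sum_const,
      Finset.card_range, nsmul_eq_mul, hC, hD, Finset.sum_const, Finset.card_range,
      nsmul_eq_mul]
    ring
  rw [hsplit]
  have hkR : (k:ℝ) = 2 * (K:ℝ) := by exact_mod_cast hk2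
  have hK0 : (K:ℝ) ≠ 0 := by positivity
  by_cases hmK : m < K
  · rw [if_pos hmK, if_pos hmK, min_eq_left hmK.le, hkR]
    have hA' := hA
    field_simp
    nlinarith [hA]
  · rw [if_neg hmK, if_neg hmK, min_eq_right (le_of_not_gt hmK), hkR]
    field_simp
    nlinarith [hA]
end

section
/- Let k=2^n and π_n the bit-reversal permutation on n bits. For any integer b, ∑_{j=0}^{k/2−1} saw((π_n(j)±b)/k) = 0. -/
/-- The bit-reversal permutation on `n` bits: reverses the binary digits of `j`. -/
def bitrev (n j : ℕ) : ℕ := ∑ i ∈ Finset.range n, (j / 2 ^ i % 2) * 2 ^ (n - 1 - i)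

lemma saw_add_int (x : ℝ) (z : ℤ) : saw (x + z) = saw x := by
  unfold saw
  rw [Int.floor_add_intCast]
  have h : (∃ m : ℤ, (m : ℝ) = x + z) ↔ (∃ m : ℤ, (m : ℝ) = x) := by
    constructor
    · rintro ⟨m, hm⟩; exact ⟨m - z, by push_cast; linarith⟩
    · rintro ⟨m, hm⟩; exact ⟨m + z, by push_cast; linarith⟩
  rw [show (∃ m : ℤ, (m : ℝ) = x + z) = (∃ m : ℤ, (m : ℝ) = x) from propext h]
  push_cast
  ring

lemma saw_nat_lt (a N : ℕ) (h : a < N) :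
    saw ((a : ℝ) / N) = (a : ℝ)/N - 1/2 + (if a = 0 then 1/2 else 0) := by
  have hN : (0:ℝ) < N := by exact_mod_cast Nat.pos_of_ne_zero (by omega)
  have h0 : (0:ℝ) ≤ (a:ℝ)/N := by positivity
  have h1 : (a:ℝ)/N < 1 := by
    rw [div_lt_one hN]; exact_mod_cast h
  unfold saw
  have hf : ⌊(a:ℝ)/N⌋ = 0 := by
    rw [Int.floor_eq_zero_iff]; exact Set.mem_Ico.mpr ⟨h0, h1⟩
  rw [hf]
  by_cases ha : a = 0
  · subst ha
    rw [if_pos (⟨0, by simp⟩ : ∃ m : ℤ, (m:ℝ) = (0:ℕ)/N), if_pos rfl]; simp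
  · have h0' : (0:ℝ) < (a:ℝ)/N := by
      apply div_pos _ hN; exact_mod_cast Nat.pos_of_ne_zero ha
    rw [if_neg, if_neg ha]
    · simp
    · rintro ⟨m, hm⟩
      rcases lt_or_ge m 1 with hm1 | hm1
      · have : m ≤ 0 := by omega
        have : (m:ℝ) ≤ 0 := by exact_mod_cast this
        linarith
      · have : (1:ℝ) ≤ m := by exact_mod_cast hm1
        linarith

lemma bitrev_succ (n j : ℕ) : bitrev (n+1) j = bitrev n (j/2) + (j % 2) * 2^n := by
  unfold bitrev
  rw [Finset.sum_range_succ']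
  congr 1
  · apply Finset.sum_congr rfl
    intro i hi
    have h1 : j / 2 ^ (i+1) = (j/2) / 2 ^ i := by
      rw [Nat.div_div_eq_div_mul, pow_succ']
    have h2 : n + 1 - 1 - (i+1) = n - 1 - i := by omega
    rw [h1, h2]
  · simp

lemma bitrev_lt (n : ℕ) : ∀ j, bitrev n j < 2^n := by
  induction n with
  | zero => intro j; simp [bitrev]
  | succ n ih =>
    intro j
    rw [bitrev_succ]
    have := ih (j/2)
    have : j % 2 ≤ 1 := by omega
    have : (j % 2) * 2^n ≤ 2^n := by
      calc (j % 2) * 2^n ≤ 1 * 2^n := Nat.mul_le_mul_right _ this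
      _ = 2^n := one_mul _
    have h2 : 2^(n+1) = 2^n + 2^n := by ring
    omega

lemma bitrev_inj (n : ℕ) : ∀ j1 j2, j1 < 2^n → j2 < 2^n → bitrev n j1 = bitrev n j2 → j1 = j2 := by
  induction n with
  | zero => intro j1 j2 h1 h2 _; omega
  | succ n ih =>
    intro j1 j2 h1 h2 heq
    rw [bitrev_succ, bitrev_succ] at heq
    have a1 := bitrev_lt n (j1/2)
    have a2 := bitrev_lt n (j2/2)
    have hb1 : j1 % 2 ≤ 1 := by omega
    have hb2 : j2 % 2 ≤ 1 := by omega
    have hbit : j1 % 2 = j2 % 2 ∧ bitrev n (j1/2) = bitrev n (j2/2) := by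
      interval_cases h : j1 % 2 <;> interval_cases h2 : j2 % 2 <;> simp_all <;> omega
    have hdiv : j1 / 2 = j2 / 2 := by
      apply ih _ _ _ _ hbit.2 <;> omega
    omega

lemma sum_bitrev (n : ℕ) (g : ℕ → ℝ) :
    ∑ j ∈ Finset.range (2^n), g (bitrev n j) = ∑ j ∈ Finset.range (2^n), g j := by
  have hinj : Set.InjOn (bitrev n) (Finset.range (2^n)) := by
    intro x hx y hy h
    exact bitrev_inj n x y (by simpa using hx) (by simpa using hy) h
  have himg : (Finset.range (2^n)).image (bitrev n) = Finset.range (2^n) := by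
    apply Finset.eq_of_subset_of_card_le
    · intro x hx
      simp only [Finset.mem_image] at hx
      obtain ⟨j, _, rfl⟩ := hx
      simpa using bitrev_lt n j
    · rw [Finset.card_image_of_injOn hinj]
  conv_rhs => rw [← himg]
  rw [Finset.sum_image (fun x hx y hy h => hinj hx hy h)]

lemma bitrev_double (m j : ℕ) (h : j < 2^m) : bitrev (m+1) j = 2 * bitrev m j := by
  unfold bitrev
  rw [Finset.sum_range_succ]
  have h0 : j / 2^m = 0 := Nat.div_eq_of_lt h
  rw [h0]
  simp only [Nat.zero_mod, Nat.zero_mul, add_zero, zero_mul]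
  rw [Finset.mul_sum]
  apply Finset.sum_congr rfl
  intro i hi
  simp only [Finset.mem_range] at hi
  have : m + 1 - 1 - i = (m - 1 - i) + 1 := by omega
  rw [this, pow_succ]
  ring

lemma gauss (K : ℕ) : (∑ i ∈ Finset.range K, (i:ℝ)) * 2 = K * (K - 1) := by
  induction K with
  | zero => simp
  | succ K ih =>
    rw [Finset.sum_range_succ]
    push_cast
    linarith

lemma key (K : ℕ) (hK : 0 < K) :
    ∀ b : ℕ, ∑ t ∈ Finset.range K, saw ((2*(t:ℝ) + (b:ℝ)) / (2*(K:ℝ))) = 0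
  | 0 => by
    have hKR : (0:ℝ) < K := by exact_mod_cast hK
    have step : ∀ t ∈ Finset.range K,
        saw ((2*(t:ℝ) + (0:ℕ)) / (2*(K:ℝ))) = (t:ℝ)/K - 1/2 + (if t = 0 then 1/2 else 0) := by
      intro t ht
      simp only [Finset.mem_range] at ht
      have : (2*(t:ℝ) + ((0:ℕ):ℝ)) / (2*(K:ℝ)) = (t:ℝ)/(K:ℝ) := by
        push_cast; field_simp; ring
      rw [this, saw_nat_lt t K ht]
    rw [Finset.sum_congr rfl step]
    rw [Finset.sum_add_distrib, Finset.sum_sub_distrib]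
    rw [Finset.sum_ite_eq' (Finset.range K) 0 (fun _ => (1:ℝ)/2)]
    simp only [Finset.mem_range, hK, if_pos]
    rw [← Finset.sum_div]
    have hg := gauss K
    have : (∑ i ∈ Finset.range K, (i:ℝ)) = K * (K-1)/2 := by linarith
    rw [this]
    simp [Finset.sum_const, Finset.card_range]
    field_simp
    ring
  | 1 => by
    have hKR : (0:ℝ) < K := by exact_mod_cast hK
    have step : ∀ t ∈ Finset.range K,
        saw ((2*(t:ℝ) + (1:ℕ)) / (2*(K:ℝ))) = (2*(t:ℝ)+1)/(2*K) - 1/2 := by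
      intro t ht
      simp only [Finset.mem_range] at ht
      have harg : (2*(t:ℝ) + ((1:ℕ):ℝ)) / (2*(K:ℝ)) = ((2*t+1 : ℕ):ℝ)/((2*K : ℕ):ℝ) := by
        push_cast; ring_nf
      rw [harg, saw_nat_lt (2*t+1) (2*K) (by omega)]
      rw [if_neg (by omega : ¬ 2*t+1 = 0)]
      push_cast
      ring
    rw [Finset.sum_congr rfl step]
    rw [Finset.sum_sub_distrib]
    have hsum : ∑ t ∈ Finset.range K, (2*(t:ℝ)+1)/(2*K)
        = (2 * (∑ t ∈ Finset.range K, (t:ℝ)) + K) / (2*K) := by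
      rw [← Finset.sum_div]
      congr 1
      rw [Finset.sum_add_distrib, Finset.mul_sum]
      simp [Finset.card_range]
    rw [hsum]
    have hg := gauss K
    have : (∑ i ∈ Finset.range K, (i:ℝ)) = K * (K-1)/2 := by linarith
    rw [this]
    simp [Finset.sum_const, Finset.card_range]
    field_simp
    ring
  | (b+2) => by
    have hKR : (0:ℝ) < K := by exact_mod_cast hK
    set F : ℕ → ℝ := fun t => saw ((2*(t:ℝ) + (b:ℝ)) / (2*(K:ℝ))) with hF
    have step : ∀ t ∈ Finset.range K,
        saw ((2*(t:ℝ) + ((b+2:ℕ):ℝ)) / (2*(K:ℝ))) = F (t+1) := by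
      intro t _
      simp only [hF]
      congr 1
      push_cast
      ring
    rw [Finset.sum_congr rfl step]
    have h1 := Finset.sum_range_succ' F K
    have h2 := Finset.sum_range_succ F K
    have hFK : F K = F 0 := by
      simp only [hF]
      have harg : (2*(K:ℝ) + (b:ℝ)) / (2*(K:ℝ)) = (2*(0:ℕ) + (b:ℝ)) / (2*(K:ℝ)) + ((1:ℤ):ℝ) := by
        push_cast; field_simp; ring
      rw [harg, saw_add_int]
    have hkey := key K hK b
    simp only [hF] at h1 h2 hkey hFK ⊢
    linarith

theorem saw_half_sum_bitrev (n k : ℕ) (hk : k = 2 ^ n) (b : ℕ) :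
    (∑ j ∈ Finset.range (k / 2), saw (((bitrev n j : ℝ) + (b : ℝ)) / (k : ℝ)) = 0)
    ∧ ∑ j ∈ Finset.range (k / 2), saw (((bitrev n j : ℝ) - (b : ℝ)) / (k : ℝ)) = 0 := by
  subst hk
  cases n with
  | zero => simp
  | succ m =>
    have hhalf : 2 ^ (m+1) / 2 = 2 ^ m := by
      rw [pow_succ, Nat.mul_div_cancel _ (by norm_num)]
    have hK : (0:ℝ) < (2:ℝ)^m := by positivity
    have hcast : ((2 ^ (m+1) : ℕ) : ℝ) = 2 * (((2^m : ℕ):ℕ) : ℝ) := by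
      push_cast; ring
    rw [hhalf]
    constructor
    · have hstep : ∀ j ∈ Finset.range (2^m),
          saw (((bitrev (m+1) j : ℝ) + (b : ℝ)) / ((2^(m+1) : ℕ) : ℝ))
          = (fun t : ℕ => saw ((2*(t:ℝ) + (b:ℝ)) / (2*((2^m : ℕ):ℝ)))) (bitrev m j) := by
        intro j hj
        simp only [Finset.mem_range] at hj
        rw [bitrev_double m j hj]
        congr 1
        push_cast
        ring
      rw [Finset.sum_congr rfl hstep,
        sum_bitrev m (fun t : ℕ => saw ((2*(t:ℝ) + (b:ℝ)) / (2*((2^m : ℕ):ℝ))))]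
      exact key (2^m) (pow_pos (by norm_num) m) b
    · have hstep : ∀ j ∈ Finset.range (2^m),
          saw (((bitrev (m+1) j : ℝ) - (b : ℝ)) / ((2^(m+1) : ℕ) : ℝ))
          = (fun t : ℕ => saw ((2*(t:ℝ) + (((2*2^m - 1)*b : ℕ):ℝ)) / (2*((2^m : ℕ):ℝ)))) (bitrev m j) := by
        intro j hj
        simp only [Finset.mem_range] at hj
        rw [bitrev_double m j hj]
        simp only
        have harg : (((2 * bitrev m j : ℕ) : ℝ) - (b : ℝ)) / ((2^(m+1) : ℕ) : ℝ)
            = (2*((bitrev m j : ℕ):ℝ) + (((2*2^m - 1)*b : ℕ):ℝ)) / (2*((2^m : ℕ):ℝ)) - ((b:ℤ):ℝ) := by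
          have hcast2 : (((2*2^m - 1)*b : ℕ) : ℝ) = (2*2^m - 1 : ℝ) * b := by
            have h1 : (1:ℕ) ≤ 2*2^m := Nat.one_le_two_pow.trans (Nat.le_mul_of_pos_left _ (by norm_num))
            push_cast [Nat.cast_sub h1]
            ring
          rw [hcast2]
          have h2m : ((2^m : ℕ) : ℝ) = (2:ℝ)^m := by push_cast; ring
          rw [h2m]
          push_cast
          field_simp
          ring
        rw [harg]
        rw [show (2*((bitrev m j : ℕ):ℝ) + (((2*2^m - 1)*b : ℕ):ℝ)) / (2*((2^m : ℕ):ℝ)) - ((b:ℤ):ℝ)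
            = (2*((bitrev m j : ℕ):ℝ) + (((2*2^m - 1)*b : ℕ):ℝ)) / (2*((2^m : ℕ):ℝ)) + ((-b:ℤ):ℝ) by push_cast; ring]
        rw [saw_add_int]
      rw [Finset.sum_congr rfl hstep,
        sum_bitrev m (fun t : ℕ => saw ((2*(t:ℝ) + (((2*2^m - 1)*b : ℕ):ℝ)) / (2*((2^m : ℕ):ℝ))))]
      exact key (2^m) (pow_pos (by norm_num) m) ((2*2^m - 1)*b)
end

section
/- For k=2^n, ∑_{j=0}^{k−1} saw(j²/k) = −√k + 3/2 if n is even, and −3√(k/8) + 3/2 if n is odd. -/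
open Finset


-- even/odd split
lemma sum_range_double {M : Type*} [AddCommMonoid M] (f : ℕ → M) (K : ℕ) :
    ∑ j ∈ range (2*K), f j = ∑ s ∈ range K, (f (2*s) + f (2*s+1)) := by
  induction K with
  | zero => simp
  | succ K ih =>
    rw [show 2*(K+1) = 2*K+1+1 by ring, sum_range_succ, sum_range_succ, ih, sum_range_succ]
    abel

-- bijection lemma
lemma sumA (k : ℕ) (hk : ∃ p, k = 2^p) :
    ∑ s ∈ range k, (2*s^2+s) % k = ∑ x ∈ range k, x := by
  obtain ⟨p, rfl⟩ := hk
  set k := 2^p with hk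
  have hkpos : 0 < k := Nat.pow_pos (by norm_num)
  have hinj : Set.InjOn (fun s => (2*s^2+s) % k) (range k) := by
    intro s hs t ht h
    simp only [mem_coe, mem_range] at hs ht
    have : (k:ℤ) ∣ (2*t^2+t) - (2*s^2+s) := by
      have := (Nat.modEq_iff_dvd (n := k) (a := 2*s^2+s) (b := 2*t^2+t)).mp h
      exact_mod_cast this
    have hfac : (2*(t:ℤ)^2+t) - (2*s^2+s) = ((t:ℤ) - s) * (2*(t+s)+1) := by ring
    rw [hfac] at this
    have hcop : IsCoprime ((k:ℤ)) (2*((t:ℤ)+s)+1) := by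
      rw [hk]
      push_cast
      refine IsCoprime.pow_left ?_
      rw [Int.prime_two.coprime_iff_not_dvd]
      omega
    have hdvd : (k:ℤ) ∣ ((t:ℤ) - s) := hcop.dvd_of_dvd_mul_right this
    have : (t:ℤ) - s = 0 := Int.eq_zero_of_abs_lt_dvd hdvd (by
      rw [abs_sub_lt_iff]; constructor <;> [skip; skip] <;> push_cast <;> omega)
    omega
  have himg : Finset.image (fun s => (2*s^2+s) % k) (range k) = range k := by
    apply Finset.eq_of_subset_of_card_le
    · intro x hx
      simp only [Finset.mem_image, mem_range] at hx ⊢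
      obtain ⟨s, _, rfl⟩ := hx
      exact Nat.mod_lt _ hkpos
    · rw [Finset.card_image_of_injOn hinj]
  have := Finset.sum_image (s := range k) (g := fun s => (2*s^2+s) % k) (f := fun x : ℕ => x) (fun a ha b hb h => hinj ha hb h)
  rw [himg] at this
  exact this.symm

-- reflection lemma
lemma sumB (k : ℕ) (hkpos : 0 < k) :
    ∑ s ∈ range k, (2*s^2+3*s+1) % k = ∑ s ∈ range k, (2*s^2+s) % k := by
  rw [← Finset.sum_range_reflect (fun s => (2*s^2+3*s+1) % k) k]
  apply Finset.sum_congr rfl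
  intro s hs
  rw [mem_range] at hs
  have h1 : s + 1 ≤ k := hs
  have : (2*(k-1-s)^2+3*(k-1-s)+1) ≡ (2*s^2+s) [MOD k] := by
    rw [Nat.modEq_iff_dvd]
    have hc : ((k-1-s : ℕ) : ℤ) = (k:ℤ) - 1 - s := by
      have : s ≤ k - 1 := by omega
      push_cast [Nat.sub_sub]
      omega
    refine ⟨-(2*((k:ℤ)-1-s) - 2*s + 1), ?_⟩
    push_cast [hc]
    ring
  exact this

def Ssum (n : ℕ) : ℕ := ∑ j ∈ range (2^n), (j^2) % 2^n
def Usum (n : ℕ) : ℕ := ∑ t ∈ range (2^n), (t^2+t) % 2^n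

lemma Usum_val (p : ℕ) : Usum (p+1) = 4 * ∑ x ∈ range (2^p), x := by
  unfold Usum
  rw [show (2:ℕ)^(p+1) = 2*2^p by ring, sum_range_double]
  have heq : ∀ s ∈ range (2^p),
      ((2*s)^2+(2*s)) % (2*2^p) + ((2*s+1)^2+(2*s+1)) % (2*2^p)
      = 2*((2*s^2+s) % 2^p) + 2*((2*s^2+3*s+1) % 2^p) := by
    intro s _
    rw [show (2*s)^2+(2*s) = 2*(2*s^2+s) by ring,
        show (2*s+1)^2+(2*s+1) = 2*(2*s^2+3*s+1) by ring,
        Nat.mul_mod_mul_left, Nat.mul_mod_mul_left]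
  rw [Finset.sum_congr rfl heq, Finset.sum_add_distrib, ← Finset.mul_sum, ← Finset.mul_sum,
      sumB _ (Nat.pow_pos (by norm_num)), sumA _ ⟨p, rfl⟩]
  ring

lemma mod4h (y N : ℕ) (hN : 0 < N) : (4*y+1) % (4*N) = 4*(y%N)+1 := by
  conv_lhs => rw [← Nat.div_add_mod y N]
  rw [show 4*(N*(y/N) + y%N)+1 = (4*(y%N)+1) + (4*N)*(y/N) by ring,
      Nat.add_mul_mod_self_left, Nat.mod_eq_of_lt (by have := Nat.mod_lt y hN; omega)]

lemma Ssum_rec (n : ℕ) : Ssum (n+2) = 8 * Ssum n + 8 * Usum n + 2^(n+1) := by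
  have hpos : 0 < (2:ℕ)^n := Nat.pow_pos (by norm_num)
  unfold Ssum
  rw [show (2:ℕ)^(n+2) = 2*2^(n+1) by ring, sum_range_double]
  have heq : ∀ s ∈ range (2^(n+1)),
      (2*s)^2 % (2*2^(n+1)) + (2*s+1)^2 % (2*2^(n+1))
      = 4*(s^2 % 2^n) + (4*((s^2+s) % 2^n) + 1) := by
    intro s _
    rw [show (2*s)^2 = 4*s^2 by ring, show (2*s+1)^2 = 4*(s^2+s)+1 by ring,
        show 2*(2:ℕ)^(n+1) = 4*2^n by ring, Nat.mul_mod_mul_left, mod4h _ _ hpos]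
  rw [Finset.sum_congr rfl heq, Finset.sum_add_distrib, Finset.sum_add_distrib,
      ← Finset.mul_sum, ← Finset.mul_sum, Finset.sum_const, Finset.card_range]
  have hT1 : ∑ s ∈ range (2^(n+1)), s^2 % 2^n = 2 * Ssum n := by
    rw [show (2:ℕ)^(n+1) = 2^n + 2^n by ring, Finset.sum_range_add, two_mul]
    congr 1
    apply Finset.sum_congr rfl
    intro r _
    rw [show (2^n + r)^2 = r^2 + 2^n*(2^n+2*r) by ring, Nat.add_mul_mod_self_left]
  have hT2 : ∑ s ∈ range (2^(n+1)), (s^2+s) % 2^n = 2 * Usum n := by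
    rw [show (2:ℕ)^(n+1) = 2^n + 2^n by ring, Finset.sum_range_add, two_mul]
    congr 1
    apply Finset.sum_congr rfl
    intro r _
    rw [show (2^n + r)^2+(2^n+r) = (r^2+r) + 2^n*(2^n+2*r+1) by ring,
        Nat.add_mul_mod_self_left]
  rw [hT1, hT2]
  unfold Ssum
  ring


lemma Usum_int' (p : ℕ) : (Usum (p+1) : ℤ) = 2*((2:ℤ)^p)^2 - 2*(2:ℤ)^p := by
  have h2 : (∑ x ∈ range (2^p), x) * 2 = 2^p * (2^p - 1) := Finset.sum_range_id_mul_two _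
  have h1 : (1:ℕ) ≤ 2^p := Nat.one_le_two_pow
  have : (Usum (p+1) : ℤ) = 2 * ((∑ x ∈ range (2^p), x : ℕ) * 2 : ℕ) := by
    rw [Usum_val]; push_cast; ring
  rw [this, h2]
  push_cast [Nat.cast_sub h1]
  ring

lemma Ssum_two : Ssum 2 = 2 := by decide
lemma Ssum_one : Ssum 1 = 1 := by decide

lemma Ssum_even (m : ℕ) :
    (Ssum (2*m+2) : ℤ) = 8*((2:ℤ)^m)^4 - 12*((2:ℤ)^m)^3 + 6*((2:ℤ)^m)^2 := by
  induction m with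
  | zero => rw [show 2*0+2 = 2 by rfl, Ssum_two]; norm_num
  | succ m ih =>
    rw [show 2*(m+1)+2 = (2*m+2)+2 by ring, Ssum_rec, show 2*m+2 = (2*m+1)+1 by ring]
    push_cast [Usum_int' (2*m+1), ih]
    rw [show 2*m+1+1 = 2*m+2 by ring] at *
    ring

lemma Ssum_odd (m : ℕ) :
    (Ssum (2*m+1) : ℤ) = 2*((2:ℤ)^m)^4 - 4*((2:ℤ)^m)^3 + 3*((2:ℤ)^m)^2 := by
  induction m with
  | zero => rw [show 2*0+1 = 1 by rfl, Ssum_one]; norm_num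
  | succ m ih =>
    rw [show 2*(m+1)+1 = (2*m+1)+2 by ring, Ssum_rec, show 2*m+1 = (2*m)+1 by ring]
    push_cast [Usum_int' (2*m), ih]
    ring

lemma saw_nat_div (a k : ℕ) (hk : 0 < k) :
    saw ((a:ℝ)/k) = ((a % k : ℕ):ℝ)/k - 1/2 + (if k ∣ a then (1:ℝ)/2 else 0) := by
  have hkR : (0:ℝ) < k := by exact_mod_cast hk
  have hdm : (k:ℝ)*((a/k:ℕ):ℝ) + ((a%k:ℕ):ℝ) = a := by exact_mod_cast Nat.div_add_mod a k
  have hfrac : (a:ℝ)/k = ((a/k : ℕ):ℝ) + ((a%k : ℕ):ℝ)/k := by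
    field_simp
    linarith
  have hlt : ((a % k : ℕ):ℝ)/k < 1 := (div_lt_one hkR).2 (by exact_mod_cast Nat.mod_lt a hk)
  have hge : (0:ℝ) ≤ ((a % k : ℕ):ℝ)/k := by positivity
  have hfloor : ⌊(a:ℝ)/k⌋ = ((a/k : ℕ) : ℤ) := by
    rw [Int.floor_eq_iff, Int.cast_natCast]
    constructor
    · rw [hfrac]; linarith
    · rw [hfrac]; linarith
  have hdelta : (∃ m:ℤ, (m:ℝ) = (a:ℝ)/k) ↔ k ∣ a := by
    constructor
    · rintro ⟨m, hm⟩
      rw [eq_div_iff hkR.ne'] at hm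
      have hmk : m * (k:ℤ) = (a:ℤ) := by exact_mod_cast hm
      have : (k:ℤ) ∣ (a:ℤ) := Dvd.intro_left m hmk
      exact_mod_cast this
    · rintro ⟨c, rfl⟩
      refine ⟨c, ?_⟩
      push_cast
      field_simp
  unfold saw
  rw [hfloor, Int.cast_natCast]
  simp only [hdelta]
  rw [hfrac]
  ring

lemma count_dvd (d K : ℕ) (hd : 0 < d) :
    ((range (d*K)).filter (fun j => d ∣ j)).card = K := by
  have himg : (range (d*K)).filter (fun j => d ∣ j) = Finset.image (fun u => d*u) (range K) := by
    ext j
    simp only [Finset.mem_filter, mem_range, Finset.mem_image]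
    constructor
    · rintro ⟨hlt, c, rfl⟩
      exact ⟨c, Nat.lt_of_mul_lt_mul_left hlt, rfl⟩
    · rintro ⟨u, hu, rfl⟩
      exact ⟨mul_lt_mul_of_pos_left hu hd, ⟨u, rfl⟩⟩
  rw [himg, Finset.card_image_of_injective _ (mul_right_injective₀ hd.ne'), Finset.card_range]

lemma dvd_sq_iff (n j : ℕ) : 2^n ∣ j^2 ↔ 2^((n+1)/2) ∣ j := by
  rcases eq_or_ne j 0 with rfl | hj
  · simp
  · have hj2 : j^2 ≠ 0 := pow_ne_zero _ hj
    rw [Nat.Prime.pow_dvd_iff_le_factorization Nat.prime_two hj2,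
        Nat.Prime.pow_dvd_iff_le_factorization Nat.prime_two hj,
        Nat.factorization_pow]
    simp only [Finsupp.smul_apply, smul_eq_mul]
    omega

theorem saw_sum_squares (n k : ℕ) (hn : 1 ≤ n) (hk : k = 2 ^ n) :
    ∑ j ∈ Finset.range k, saw (((j : ℝ) ^ 2) / (k : ℝ))
      = if Even n then -Real.sqrt (k : ℝ) + 3 / 2
        else -3 * Real.sqrt ((k : ℝ) / 8) + 3 / 2 := by
  subst hk
  have hk0 : (0:ℕ) < 2^n := Nat.pow_pos (by norm_num)
  have hterm : ∀ j ∈ range (2^n), saw ((j:ℝ)^2/((2^n : ℕ):ℝ))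
      = ((j^2 % 2^n : ℕ):ℝ)/((2^n : ℕ):ℝ) - 1/2 + (if 2^((n+1)/2) ∣ j then (1:ℝ)/2 else 0) := by
    intro j _
    have h1 : ((j:ℝ))^2 = ((j^2 : ℕ):ℝ) := by push_cast; ring
    rw [h1, saw_nat_div _ _ hk0, if_congr (dvd_sq_iff n j) rfl rfl]
  rw [Finset.sum_congr rfl hterm]
  have hsum : ∑ j ∈ range (2^n),
      (((j^2 % 2^n : ℕ):ℝ)/((2^n : ℕ):ℝ) - 1/2 + (if 2^((n+1)/2) ∣ j then (1:ℝ)/2 else 0))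
      = (Ssum n : ℝ)/((2^n : ℕ):ℝ) - (2^n : ℕ)*(1/2 : ℝ) + (2^(n/2) : ℕ)*(1/2 : ℝ) := by
    rw [Finset.sum_add_distrib, Finset.sum_sub_distrib]
    congr 1
    · congr 1
      · rw [← Finset.sum_div]
        congr 1
        rw [Ssum]
        push_cast
        rfl
      · rw [Finset.sum_const, Finset.card_range, nsmul_eq_mul]
    · rw [← Finset.sum_filter, Finset.sum_const, nsmul_eq_mul]
      congr 2
      rw [show (2:ℕ)^n = 2^((n+1)/2) * 2^(n/2) by rw [← pow_add]; congr 1; omega]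
      exact count_dvd _ _ (Nat.pow_pos (by norm_num))
  rw [hsum]
  by_cases hpar : Even n
  · rw [if_pos hpar]
    obtain ⟨t, ht⟩ := hpar
    obtain ⟨m, rfl⟩ : ∃ m, n = 2*m+2 := ⟨t-1, by omega⟩
    have hS : (Ssum (2*m+2) : ℝ) = 8*((2:ℝ)^m)^4 - 12*((2:ℝ)^m)^3 + 6*((2:ℝ)^m)^2 := by
      exact_mod_cast Ssum_even m
    have hsqrt : Real.sqrt (((2^(2*m+2) : ℕ)):ℝ) = 2*(2:ℝ)^m := by
      rw [show (((2^(2*m+2) : ℕ)):ℝ) = (2*(2:ℝ)^m)^2 by push_cast; ring]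
      exact Real.sqrt_sq (by positivity)
    rw [hsqrt, hS, show (2*m+2)/2 = m+1 by omega]
    have hx : (0:ℝ) < (2:ℝ)^m := by positivity
    push_cast
    field_simp
    ring
  · rw [if_neg hpar]
    obtain ⟨m, rfl⟩ : ∃ m, n = 2*m+1 := Nat.not_even_iff_odd.mp hpar
    have hS : (Ssum (2*m+1) : ℝ) = 2*((2:ℝ)^m)^4 - 4*((2:ℝ)^m)^3 + 3*((2:ℝ)^m)^2 := by
      exact_mod_cast Ssum_odd m
    have hsqrt : Real.sqrt ((((2^(2*m+1) : ℕ)):ℝ)/8) = (2:ℝ)^m/2 := by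
      rw [show (((2^(2*m+1) : ℕ)):ℝ)/8 = ((2:ℝ)^m/2)^2 by push_cast; ring]
      exact Real.sqrt_sq (by positivity)
    rw [hsqrt, hS, show (2*m+1)/2 = m by omega]
    have hx : (0:ℝ) < (2:ℝ)^m := by positivity
    push_cast
    field_simp
    ring
end

section
/- For k=2^n, ∑_{j=0}^{k−1} ⌊j²/k⌋ = k²/3 − k + (3√k)/2 − 4/3 if n is even, and k²/3 − k + √(2k) − 4/3 if n is odd. -/
open Finset

lemma sum_range_two_mul (N : ℕ) (f : ℕ → ℕ) :
    ∑ j ∈ range (2*N), f j = ∑ i ∈ range N, (f (2*i) + f (2*i+1)) := by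
  induction N with
  | zero => simp
  | succ n ih =>
    have h : 2*(n+1) = (2*n+1)+1 := by ring
    rw [h, sum_range_succ, sum_range_succ, ih, sum_range_succ]
    omega

lemma tri_inj (k a b : ℕ) (ha : a < 2^k) (hb : b < 2^k)
    (h : (a*(a+1)) % 2^(k+1) = (b*(b+1)) % 2^(k+1)) : a = b := by
  wlog hab : a ≤ b generalizing a b
  · exact (this b a hb ha h.symm (le_of_not_ge hab)).symm
  have h' : a*(a+1) ≡ b*(b+1) [MOD 2^(k+1)] := h
  have hdvdN : 2^(k+1) ∣ (b-a)*(a+b+1) := by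
    have hz : ((2^(k+1):ℕ):ℤ) ∣ (((b-a)*(a+b+1) : ℕ) : ℤ) := by
      push_cast [Nat.cast_sub hab]
      have e : ((b:ℤ) - a)*((a:ℤ)+b+1) = (↑(b*(b+1)) - ↑(a*(a+1)) : ℤ) := by push_cast; ring
      rw [e]; exact_mod_cast h'.dvd
    exact_mod_cast hz
  have hpow : 2^k < 2^(k+1) := by
    have : (2:ℕ)^(k+1) = 2^k * 2 := by ring
    have hp : 0 < (2:ℕ)^k := Nat.pow_pos (by norm_num)
    omega
  rcases Nat.even_or_odd (b - a) with he | ho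
  · have hodd : Odd (a+b+1) := by
      rcases he with ⟨t, ht⟩
      exact ⟨a + t, by omega⟩
    have hcop : Nat.Coprime (2^(k+1)) (a+b+1) :=
      Nat.Coprime.pow_left _ (hodd.coprime_two_left)
    have hd := hcop.dvd_of_dvd_mul_right hdvdN
    rcases Nat.eq_zero_or_pos (b - a) with h0 | hp
    · omega
    · have := Nat.le_of_dvd hp hd
      omega
  · have hcop : Nat.Coprime (2^(k+1)) (b-a) :=
      Nat.Coprime.pow_left _ (ho.coprime_two_left)
    have hd := hcop.dvd_of_dvd_mul_left hdvdN
    have := Nat.le_of_dvd (by omega) hd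
    have h2 : (2:ℕ)^(k+1) = 2^k + 2^k := by ring
    omega


lemma R_half (k : ℕ) : ∑ q ∈ range (2^k), (q*(q+1)) % 2^(k+1)
    = ∑ t ∈ range (2^k), 2*t := by
  set g : ℕ → ℕ := fun q => (q*(q+1)) % 2^(k+1) with hg
  have hinj : Set.InjOn g (range (2^k)) := by
    intro a ha b hb hab
    exact tri_inj k a b (mem_range.mp ha) (mem_range.mp hb) hab
  have hinj2 : Set.InjOn (fun t => 2*t) (range (2^k) : Finset ℕ) := by
    intro a _ b _ h
    simp only at h
    omega
  have hsub : (range (2^k)).image g ⊆ (range (2^k)).image (fun t => 2*t) := by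
    intro x hx
    rcases mem_image.mp hx with ⟨q, hq, rfl⟩
    have heven : 2 ∣ g q := by
      have h2 : (2:ℕ) ∣ 2^(k+1) := dvd_pow_self 2 (Nat.succ_ne_zero k)
      rw [hg]
      simp only
      rw [Nat.dvd_mod_iff h2]
      exact (Nat.even_mul_succ_self q).two_dvd
    have hlt : g q < 2^(k+1) := Nat.mod_lt _ (Nat.pow_pos (by norm_num))
    rcases heven with ⟨t, ht⟩
    refine mem_image.mpr ⟨t, mem_range.mpr ?_, by omega⟩
    have : (2:ℕ)^(k+1) = 2 * 2^k := by ring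
    omega
  have hcard : ((range (2^k)).image (fun t => 2*t)).card ≤ ((range (2^k)).image g).card := by
    rw [Finset.card_image_of_injOn hinj, Finset.card_image_of_injOn hinj2]
  have heq := Finset.eq_of_subset_of_card_le hsub hcard
  have A := Finset.sum_image (s := range (2^k)) (g := g) (f := fun x => x)
    (fun a ha b hb h => hinj ha hb h)
  have B := Finset.sum_image (s := range (2^k)) (g := fun t => 2*t) (f := fun x => x)
    (fun a ha b hb h => hinj2 ha hb h)
  calc ∑ q ∈ range (2^k), g q = ∑ x ∈ (range (2^k)).image g, x := A.symm
    _ = ∑ x ∈ (range (2^k)).image (fun t => 2*t), x := by rw [heq]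
    _ = ∑ t ∈ range (2^k), 2*t := B

lemma R_full (k : ℕ) : (∑ q ∈ range (2^(k+1)), (q*(q+1)) % 2^(k+1)) + 2^(k+1)
    = 2^(k+1) * 2^k := by
  have hsplit : (2:ℕ)^(k+1) = 2^k + 2^k := by ring
  rw [hsplit, Finset.sum_range_add]
  have hrefl : ∑ r ∈ range (2^k), ((2^k + r)*((2^k + r)+1)) % (2^k + 2^k)
      = ∑ r ∈ range (2^k), (r*(r+1)) % (2^k + 2^k) := by
    rw [← Finset.sum_range_reflect]
    apply Finset.sum_congr rfl
    intro r hr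
    have hr' : r < 2^k := mem_range.mp hr
    have hp : 0 < (2:ℕ)^k := Nat.pow_pos (by norm_num)
    have hkey : (2^k + (2^k - 1 - r)) * ((2^k + (2^k - 1 - r)) + 1)
        = (2^k + 2^k) * ((2^k + 2^k) - (2*r+1)) + r*(r+1) := by
      zify [show r ≤ 2^k - 1 by omega, show 2*r+1 ≤ 2^k + 2^k by omega,
        show (1:ℕ) ≤ 2^k by omega]
      ring
    rw [hkey, Nat.mul_add_mod]
  rw [hrefl]
  have h1 := R_half k
  rw [hsplit] at h1
  rw [h1]
  have hgauss : (∑ t ∈ range (2^k), t) * 2 = 2^k * (2^k - 1) := Finset.sum_range_id_mul_two _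
  have hp : 0 < (2:ℕ)^k := Nat.pow_pos (by norm_num)
  have hsum2 : ∑ t ∈ range (2^k), 2*t = 2 * ∑ t ∈ range (2^k), t := by
    rw [Finset.mul_sum]
  have e1 : 2^k * (2^k - 1) = 2^k * 2^k - 2^k := by
    rw [Nat.mul_sub]; omega
  have e2 : (2^k + 2^k) * 2^k = 2^k * 2^k + 2^k * 2^k := by ring
  have e3 : 2^k ≤ 2^k * 2^k := Nat.le_mul_of_pos_left _ hp
  omega

lemma sum_sq_add (N : ℕ) : 3 * (∑ q ∈ range N, (q^2+q)) + N = N^3 := by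
  induction N with
  | zero => simp
  | succ n ih =>
    rw [sum_range_succ]
    have h : (n+1)^3 = n^3 + 3*(n^2+n) + 1 := by ring
    omega

lemma Bform (k : ℕ) : 3 * (∑ q ∈ range (2^(k+1)), (q^2+q)/2^(k+1)) + 3*2^k
    = 2^(2*(k+1)) + 2 := by
  set N := (2:ℕ)^(k+1) with hN
  set S := ∑ q ∈ range N, (q^2+q)/N with hS
  set Rm := ∑ q ∈ range N, (q^2+q) % N with hRm
  have hp : 0 < N := Nat.pow_pos (by norm_num)
  have hdm : ∑ q ∈ range N, (q^2+q) = N * S + Rm := by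
    rw [hS, hRm, Finset.mul_sum, ← Finset.sum_add_distrib]
    apply Finset.sum_congr rfl
    intro q _
    exact (Nat.div_add_mod _ _).symm
  have hR' : Rm + N = N * 2^k := by
    have h0 := R_full k
    rw [← hN] at h0
    rw [hRm]
    have : ∑ q ∈ range N, (q^2+q) % N = ∑ q ∈ range N, (q*(q+1)) % N := by
      apply Finset.sum_congr rfl
      intro q _
      ring_nf
    rw [this]
    exact h0
  have hcube := sum_sq_add N
  rw [hdm] at hcube
  have hgoal : N * (3*S + 3*2^k) = N * (N^2 + 2) := by
    zify at hcube hR' ⊢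
    linear_combination hcube - 3*hR'
  have hfin := Nat.eq_of_mul_eq_mul_left hp hgoal
  have hN2 : 2^(2*(k+1)) = N^2 := by rw [hN]; ring
  omega


lemma div41 (x m : ℕ) (hm : 0 < m) : (4*x+1)/(4*m) = x/m := by
  have key := Nat.div_add_mod x m
  have h1 : 4*x+1 = (4*(x%m)+1) + (4*m)*(x/m) := by
    have e : (4*m)*(x/m) = 4*(m*(x/m)) := by ring
    omega
  rw [h1, Nat.add_mul_div_left _ _ (by positivity),
    Nat.div_eq_of_lt (by have := Nat.mod_lt x hm; omega), Nat.zero_add]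

lemma shiftdiv (a b h : ℕ) (hh : 0 < h) : (a + b*h)/h = a/h + b :=
  Nat.add_mul_div_right _ _ hh

lemma Arec (n : ℕ) :
    (∑ j ∈ range (2^(n+2)), j^2/2^(n+2)) + 2^n
    = 2*(∑ j ∈ range (2^n), j^2/2^n) + 2*(∑ q ∈ range (2^n), (q^2+q)/2^n) + 4^(n+1) := by
  have hp : 0 < (2:ℕ)^n := Nat.pow_pos (by norm_num)
  have h2 : (2:ℕ)^(n+2) = 2*2^(n+1) := by ring
  rw [h2, sum_range_two_mul]
  have hterm : ∀ i, (2*i)^2/(2*2^(n+1)) + (2*i+1)^2/(2*2^(n+1))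
      = i^2/2^n + (i^2+i)/2^n := by
    intro i
    have hm : 2*2^(n+1) = 4*2^n := by ring
    have e1 : (2*i)^2 = 4*i^2 := by ring
    have e2 : (2*i+1)^2 = 4*(i^2+i)+1 := by ring
    rw [hm, e1, e2, Nat.mul_div_mul_left _ _ (by norm_num), div41 _ _ hp]
  rw [Finset.sum_congr rfl (fun i _ => hterm i), Finset.sum_add_distrib]
  have hsplit : (2:ℕ)^(n+1) = 2^n + 2^n := by ring
  rw [hsplit, Finset.sum_range_add, Finset.sum_range_add]
  have hshift1 : ∀ r, ((2^n + r)^2)/2^n = r^2/2^n + (2*r + 2^n) := by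
    intro r
    have e : (2^n + r)^2 = r^2 + (2*r + 2^n)*2^n := by ring
    rw [e, shiftdiv _ _ _ hp]
  have hshift2 : ∀ r, ((2^n + r)^2 + (2^n + r))/2^n = (r^2+r)/2^n + (2*r + 2^n + 1) := by
    intro r
    have e : (2^n + r)^2 + (2^n + r) = (r^2+r) + (2*r + 2^n + 1)*2^n := by ring
    rw [e, shiftdiv _ _ _ hp]
  rw [Finset.sum_congr rfl (fun r _ => hshift1 r), Finset.sum_congr rfl (fun r _ => hshift2 r)]
  simp only [Finset.sum_add_distrib, Finset.sum_const, card_range, smul_eq_mul, ← Finset.mul_sum]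
  have hms : ∑ x ∈ range (2^n), 2*x = 2 * ∑ x ∈ range (2^n), x := by
    rw [Finset.mul_sum]
  have hgauss : (∑ r ∈ range (2^n), r) * 2 = 2^n * (2^n - 1) := Finset.sum_range_id_mul_two _
  have e1 : 2^n * (2^n - 1) = 2^n*2^n - 2^n := by rw [Nat.mul_sub]; omega
  have e2 : (4:ℕ)^(n+1) = 4*(2^n*2^n) := by
    have h4 : (4:ℕ)^(n+1) = 4*4^n := by ring
    have h5 : (4:ℕ)^n = 2^n*2^n := by
      rw [show (4:ℕ) = 2*2 by norm_num, mul_pow]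
    omega
  have e3 : 2^n ≤ 2^n*2^n := Nat.le_mul_of_pos_left _ hp
  omega

def As (n : ℕ) : ℕ := ∑ j ∈ Finset.range (2^n), j^2/2^n
def Bs (n : ℕ) : ℕ := ∑ q ∈ Finset.range (2^n), (q^2+q)/2^n

lemma Arec' (n : ℕ) : As (n+2) + 2^n = 2*As n + 2*Bs n + 4^(n+1) := by
  simpa [As, Bs] using Arec n
lemma Bform' (k : ℕ) : 3 * Bs (k+1) + 3*2^k = 2^(2*(k+1)) + 2 := by
  simpa [Bs] using Bform k

lemma AsOne : As 1 = 0 := by norm_num [As, Finset.sum_range_succ]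
lemma AsTwo : As 2 = 3 := by norm_num [As, Finset.sum_range_succ]

lemma main (m : ℕ) :
    (6 * As (2*m+1) + 6*2^(2*m+1) + 8 = 2*2^(4*m+2) + 6*2^(m+1)) ∧
    (6 * As (2*m+2) + 6*2^(2*m+2) + 8 = 2*2^(4*m+4) + 9*2^(m+1)) := by
  induction m with
  | zero => refine ⟨?_, ?_⟩ <;> norm_num [AsOne, AsTwo]
  | succ m ih =>
    obtain ⟨ih1, ih2⟩ := ih
    set x := (2:ℕ)^m with hx
    have ha1 := Arec' (2*m+1)
    have hb1 := Bform' (2*m)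
    have ha2 := Arec' (2*m+2)
    have hb2 := Bform' (2*m+1)
    -- power rewrites
    have p1 : (2:ℕ)^(2*m+1) = 2*x^2 := by rw [hx]; ring_nf
    have p2 : (2:ℕ)^(2*m) = x^2 := by rw [hx, ← pow_mul]; ring_nf
    have p3 : (2:ℕ)^(2*m+2) = 4*x^2 := by rw [hx]; ring_nf
    have p4 : (2:ℕ)^(4*m+2) = 4*x^4 := by rw [hx]; ring_nf
    have p5 : (2:ℕ)^(4*m+4) = 16*x^4 := by rw [hx]; ring_nf
    have p6 : (4:ℕ)^(2*m+1+1) = 16*x^4 := by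
      rw [hx, show (4:ℕ) = 2^2 by norm_num, ← pow_mul]; ring_nf
    have p7 : (4:ℕ)^(2*m+2+1) = 64*x^4 := by
      rw [hx, show (4:ℕ) = 2^2 by norm_num, ← pow_mul]; ring_nf
    have p8 : (2:ℕ)^(2*(2*m+1)) = 4*x^4 := by rw [hx]; ring_nf
    have p9 : (2:ℕ)^(2*(2*m+1+1)) = 16*x^4 := by rw [hx]; ring_nf
    have p10 : (2:ℕ)^(m+1) = 2*x := by rw [hx]; ring
    -- goal indices
    have g1 : 2*(m+1)+1 = (2*m+1)+2 := by ring
    have g2 : 2*(m+1)+2 = (2*m+2)+2 := by ring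
    have g3 : (2:ℕ)^(2*m+1+2) = 8*x^2 := by rw [hx]; ring_nf
    have g4 : (2:ℕ)^(2*m+2+2) = 16*x^2 := by rw [hx]; ring_nf
    have g5 : (2:ℕ)^(4*(m+1)+2) = 64*x^4 := by rw [hx]; ring_nf
    have g6 : (2:ℕ)^(4*(m+1)+4) = 256*x^4 := by rw [hx]; ring_nf
    have g7 : (2:ℕ)^(m+1+1) = 4*x := by rw [hx]; ring
    rw [p1, p4, p10] at ih1
    rw [p3, p5, p10] at ih2
    rw [p1, p6] at ha1
    rw [p8, p2] at hb1
    rw [p3, p7] at ha2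
    rw [show 2*m+1+1 = 2*m+2 from by ring] at hb2
    rw [p9, p1] at hb2
    refine ⟨?_, ?_⟩
    · rw [g1, g3, g5, g7]
      linarith
    · rw [g2, g4, g6, g7]
      linarith

theorem floor_sum_squares (n k : ℕ) (hn : 1 ≤ n) (hk : k = 2 ^ n) :
    ((∑ j ∈ Finset.range k, j ^ 2 / k : ℕ) : ℝ)
      = if Even n then (k : ℝ) ^ 2 / 3 - (k : ℝ) + 3 * Real.sqrt (k : ℝ) / 2 - 4 / 3
        else (k : ℝ) ^ 2 / 3 - (k : ℝ) + Real.sqrt (2 * (k : ℝ)) - 4 / 3 := by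
  subst hk
  have hA : (∑ j ∈ Finset.range (2^n), j ^ 2 / 2^n : ℕ) = As n := rfl
  rw [hA]
  rcases Nat.even_or_odd n with hev | hod
  · rw [if_pos hev]
    obtain ⟨t, ht⟩ := hev
    have ht1 : 1 ≤ t := by omega
    obtain ⟨m, rfl⟩ : ∃ m, t = m + 1 := ⟨t - 1, by omega⟩
    have hn2 : n = 2*m+2 := by omega
    subst hn2
    have h := (main m).2
    have hcast : 6 * (As (2*m+2) : ℝ) + 6*2^(2*m+2) + 8 = 2*2^(4*m+4) + 9*2^(m+1) := by
      exact_mod_cast h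
    have hsqrt : Real.sqrt (((2^(2*m+2) : ℕ) : ℝ)) = 2^(m+1) := by
      have h1 : (((2^(2*m+2) : ℕ)) : ℝ) = ((2:ℝ)^(m+1))^2 := by
        push_cast
        rw [← pow_mul]
        ring_nf
      rw [h1, Real.sqrt_sq (by positivity)]
    rw [hsqrt]
    have hpow : (((2^(2*m+2) : ℕ)) : ℝ)^2 = 2^(4*m+4) := by
      push_cast
      rw [← pow_mul]
      ring_nf
    have hk : (((2^(2*m+2) : ℕ)) : ℝ) = 2^(2*m+2) := by push_cast; ring
    rw [hpow, hk]
    linarith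
  · rw [if_neg (Nat.not_even_iff_odd.mpr hod)]
    obtain ⟨m, rfl⟩ := hod
    have h := (main m).1
    have hcast : 6 * (As (2*m+1) : ℝ) + 6*2^(2*m+1) + 8 = 2*2^(4*m+2) + 6*2^(m+1) := by
      exact_mod_cast h
    have hsqrt : Real.sqrt (2 * ((2^(2*m+1) : ℕ) : ℝ)) = 2^(m+1) := by
      have h1 : 2 * (((2^(2*m+1) : ℕ)) : ℝ) = ((2:ℝ)^(m+1))^2 := by
        push_cast
        rw [← pow_mul]
        ring
      rw [h1, Real.sqrt_sq (by positivity)]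
    rw [hsqrt]
    have hpow : (((2^(2*m+1) : ℕ)) : ℝ)^2 = 2^(4*m+2) := by
      push_cast
      rw [← pow_mul]
      ring_nf
    have hk : (((2^(2*m+1) : ℕ)) : ℝ) = 2^(2*m+1) := by push_cast; ring
    rw [hpow, hk]
    linarith
end
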